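/- (Varentropy bound on the mixing window.) Let (E, ℰ, μ, (κ_t), x) be as in the framework with spectral gap λ > 0, the process started at the point x. Let ε ∈ (0,1) and let t > 0 be such that TV(X_t) ≤ 1 − ε, the density f_t exists, and Ent(X_t) and Varent(X_t) are finite. Then t_mix(ε) ≤ t + 2/(λ ε²) + √(Varent(X_t)) / (λ ε²). -/

import Mathlib

open MeasureTheory ProbabilityTheory Filter Topology
open scoped ENNReal

noncomputable section

variable {E : Type*} [MeasurableSpace E]

/-- Total variation distance between two measures: `sup_{A ∈ ℰ} |ν(A) − μ(A)|`. -/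
def tvDist (ν μ : Measure E) : ℝ :=
  ⨆ A : {A : Set E // MeasurableSet A}, |(ν A.1).toReal - (μ A.1).toReal|

/-- The Markov operator `P_t f := ∫ f(y) κ_t(·, dy)`. -/
def Pop (κ : ℝ → Kernel E E) (t : ℝ) (f : E → ℝ) : E → ℝ :=
  fun x => ∫ y, f y ∂(κ t x)

/-- The framework: a measurable semigroup `(κ_t)_{t ≥ 0}` of Markov kernels on `E`
(`κ_0(x, ·) = δ_x` and `κ_{s+t}(x, A) = ∫ κ_t(y, A) κ_s(x, dy)`), reversible with
respect to the probability measure `μ`. -/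
structure Framework (E : Type*) [MeasurableSpace E] where
  μ : Measure E
  isProb : IsProbabilityMeasure μ
  κ : ℝ → Kernel E E
  isMarkov : ∀ t : ℝ, IsMarkovKernel (κ t)
  κ_zero : ∀ x : E, (κ 0) x = Measure.dirac x
  semigroup : ∀ s t : ℝ, 0 ≤ s → 0 ≤ t → κ (s + t) = (κ t).comp (κ s)
  reversible : ∀ t : ℝ, 0 ≤ t → ∀ A B : Set E, MeasurableSet A → MeasurableSet B →
    ∫ x in A, ((κ t) x B).toReal ∂μ = ∫ x in B, ((κ t) x A).toReal ∂μ

/-- The semigroup has spectral gap `lam`: for every `f ∈ L²(μ)` with `∫ f dμ = 0` and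
every `t ≥ 0`, `‖P_t f‖₂ ≤ e^{-lam t} ‖f‖₂`. -/
def HasSpectralGap (F : Framework E) (lam : ℝ) : Prop :=
  ∀ f : E → ℝ, MemLp f 2 F.μ → ∫ x, f x ∂F.μ = 0 → ∀ t : ℝ, 0 ≤ t →
    eLpNorm (Pop F.κ t f) 2 F.μ ≤ ENNReal.ofReal (Real.exp (-lam * t)) * eLpNorm f 2 F.μ

/-- Mixing time of the process started at `x`: `inf {t > 0 : TV(X_t) ≤ ε}` (`∞` if the
set is empty). -/
def tmix (F : Framework E) (x : E) (ε : ℝ) : ℝ≥0∞ :=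
  ⨅ (t : ℝ) (_ : 0 < t ∧ tvDist ((F.κ t) x) F.μ ≤ ε), ENNReal.ofReal t

open scoped NNReal

private lemma meas_inter_toMeasurable_eq_zero {μ : Measure E} [IsFiniteMeasure μ]
    {M X : Set E} (hM : MeasurableSet M) (hMX : M ∩ X = ∅) :
    μ (M ∩ toMeasurable μ X) = 0 := by
  have h1 : μ X ≤ μ (toMeasurable μ X \ M) := by
    refine measure_mono fun a ha => ⟨subset_toMeasurable μ X ha, fun hm => ?_⟩
    exact absurd (Set.mem_inter hm ha) (by simp [hMX])
  have h2 : μ (toMeasurable μ X ∩ M) + μ (toMeasurable μ X \ M) = μ (toMeasurable μ X) :=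
    measure_inter_add_diff _ hM
  rw [measure_toMeasurable] at h2
  have h3 : μ (toMeasurable μ X ∩ M) + μ (toMeasurable μ X \ M) ≤ 0 + μ (toMeasurable μ X \ M) := by
    rw [zero_add, h2]; exact h1
  have h4 := (ENNReal.add_le_add_iff_right (measure_ne_top μ _)).mp h3
  rw [Set.inter_comm] at h4
  exact le_antisymm h4 zero_le

private lemma var_expand {μ : Measure E} [IsProbabilityMeasure μ] {G : E → ℝ} {m V : ℝ}
    (hint : Integrable G μ) (hint2 : Integrable (fun y => G y ^ 2) μ)
    (hm : ∫ y, G y ∂μ = m) (hV : ∫ y, G y ^ 2 ∂μ = m ^ 2 + V) (c : ℝ) :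
    ∫ y, (G y + c) ^ 2 ∂μ = m ^ 2 + V + 2 * c * m + c ^ 2 := by
  have h1 : ∀ y, (G y + c) ^ 2 = G y ^ 2 + (2 * c) * G y + c ^ 2 := fun y => by ring
  simp only [h1]
  rw [integral_add (by exact (hint2.add (hint.const_mul _))) (integrable_const _),
    integral_add hint2 (hint.const_mul _), integral_const_mul, hm, hV, integral_const]
  simp only [measureReal_def, measure_univ, ENNReal.toReal_one, smul_eq_mul, one_mul]

private lemma var_nonneg {μ : Measure E} [IsProbabilityMeasure μ] {G : E → ℝ} {m V : ℝ}
    (hint : Integrable G μ) (hint2 : Integrable (fun y => G y ^ 2) μ)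
    (hm : ∫ y, G y ∂μ = m) (hV : ∫ y, G y ^ 2 ∂μ = m ^ 2 + V) : 0 ≤ V := by
  have h := var_expand hint hint2 hm hV (-m)
  have h2 : ∫ y, (G y + -m) ^ 2 ∂μ = V := by rw [h]; ring
  rw [← h2]
  exact integral_nonneg fun y => sq_nonneg _

private lemma cantelli {μ : Measure E} [IsProbabilityMeasure μ] {G : E → ℝ} (hG : Measurable G)
    {m V a : ℝ} (hint : Integrable G μ) (hint2 : Integrable (fun y => G y ^ 2) μ)
    (hm : ∫ y, G y ∂μ = m) (hV : ∫ y, G y ^ 2 ∂μ = m ^ 2 + V) (ha : 0 ≤ a) :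
    (μ {y | G y - m > a}).toReal ≤ V / (V + a ^ 2) := by
  have hVnn := var_nonneg hint hint2 hm hV
  have hintc : Integrable (fun y => (G y + -m) ^ 2) μ := by
    have : ∀ y, (G y + -m) ^ 2 = G y ^ 2 + (-2*m) * G y + m ^ 2 := fun y => by ring
    simp only [this]
    exact (hint2.add (hint.const_mul _)).add (integrable_const _)
  rcases eq_or_lt_of_le hVnn with hV0 | hVpos
  · -- V = 0 : G = m a.e.
    have h2 : ∫ y, (G y + -m) ^ 2 ∂μ = 0 := by
      rw [var_expand hint hint2 hm hV (-m), ← hV0]; ring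
    have h3 : (fun y => (G y + -m) ^ 2) =ᵐ[μ] 0 :=
      (integral_eq_zero_iff_of_nonneg (fun y => sq_nonneg _) hintc).mp h2
    have h4 : μ {y | G y - m > a} = 0 := by
      have h3' : ∀ᵐ y ∂μ, G y + -m = 0 := by
        filter_upwards [h3] with y hy
        have : (G y + -m) ^ 2 = 0 := hy
        exact pow_eq_zero_iff two_ne_zero |>.mp this
      have hnull : μ {y | ¬ G y + -m = 0} = 0 := by simpa [ae_iff] using h3'
      refine measure_mono_null (fun y hy => ?_) hnull
      have hgt : 0 < G y - m := lt_of_le_of_lt ha hy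
      simp only [Set.mem_setOf_eq]
      intro h; rw [show G y + -m = G y - m by ring] at h; linarith
    rw [h4]
    simp only [ENNReal.toReal_zero]
    exact div_nonneg (le_of_eq hV0) (by positivity)
  · rcases eq_or_lt_of_le ha with ha0 | hapos
    · -- a = 0: RHS = V/V = 1
      rw [← ha0]
      have : V / (V + 0 ^ 2) = 1 := by simp [hVpos.ne']
      rw [this]
      exact le_trans (ENNReal.toReal_mono ENNReal.one_ne_top prob_le_one) (by simp)
    · set u := V / a with hu
      have hupos : 0 < u := div_pos hVpos hapos
      have haU : 0 < a + u := by positivity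
      have key : ∀ y, Set.indicator {y | G y - m > a} (fun _ => (1:ℝ)) y ≤
          ((G y - m + u) / (a + u)) ^ 2 := by
        intro y
        by_cases hy : y ∈ {y | G y - m > a}
        · rw [Set.indicator_of_mem hy]
          have h5 : a + u ≤ G y - m + u := by
            have := hy; simp only [Set.mem_setOf_eq] at this; linarith
          rw [div_pow, le_div_iff₀ (by positivity), one_mul]
          have := sq_le_sq' (by linarith) h5
          calc (a+u)^2 ≤ (G y - m + u)^2 := by nlinarith
          _ = _ := rfl
        · rw [Set.indicator_of_notMem hy]; positivity
      have hmeasS : MeasurableSet {y | G y - m > a} :=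
        measurableSet_lt (measurable_const) (by measurability)
      have hintr : Integrable (fun y => ((G y - m + u) / (a + u)) ^ 2) μ := by
        have : ∀ y, ((G y - m + u) / (a + u)) ^ 2 = ((a+u)^2)⁻¹ * (G y + (u - m)) ^ 2 := by
          intro y; rw [div_pow]; ring_nf
        simp only [this]
        refine Integrable.const_mul ?_ _
        have h6 : ∀ y, (G y + (u - m)) ^ 2 = G y ^ 2 + (2*(u-m)) * G y + (u-m)^2 :=
          fun y => by ring
        simp only [h6]
        exact (hint2.add (hint.const_mul _)).add (integrable_const _)
      have h7 : (μ {y | G y - m > a}).toReal = ∫ y, Set.indicator {y | G y - m > a} (fun _ => (1:ℝ)) y ∂μ := by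
        rw [integral_indicator hmeasS]; simp [measureReal_def]
      rw [h7]
      have h8 : ∫ y, Set.indicator {y | G y - m > a} (fun _ => (1:ℝ)) y ∂μ ≤
          ∫ y, ((G y - m + u) / (a + u)) ^ 2 ∂μ := by
        refine integral_mono ?_ hintr key
        exact (integrable_const (1:ℝ)).indicator hmeasS
      refine le_trans h8 ?_
      have h9 : ∫ y, ((G y - m + u) / (a + u)) ^ 2 ∂μ = (V + u ^ 2)/(a+u)^2 := by
        have : ∀ y, ((G y - m + u) / (a + u)) ^ 2 = ((a+u)^2)⁻¹ * (G y + (u - m)) ^ 2 := by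
          intro y; rw [div_pow]; ring_nf
        simp only [this]
        rw [integral_const_mul, var_expand hint hint2 hm hV (u - m)]
        field_simp; ring
      rw [h9]
      have h10 : (V + u^2)/(a+u)^2 = V / (V + a^2) := by
        rw [hu]; field_simp; ring
      rw [h10]

private lemma eps_cube_ineq {ε : ℝ} (h0 : 0 < ε) (h1 : ε < 1) : (2 - ε) / ε ≤ 1 / ε ^ 4 := by
  rw [div_le_div_iff₀ h0 (by positivity)]
  have ha : (0:ℝ) ≤ ε * (1 - ε) := mul_nonneg h0.le (by linarith)
  have hb : (0:ℝ) ≤ 1 + ε + ε ^ 2 * (1 - ε) := by nlinarith [sq_nonneg ε]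
  nlinarith [mul_nonneg ha hb]

private lemma log_budget {ε : ℝ} (h0 : 0 < ε) (h1 : ε < 1) :
    3 / 2 * Real.log (2 / ε) ≤ 2 / ε ^ 2 := by
  have hlog1 : Real.log (2 / ε) ≤ 2 / ε - 1 := Real.log_le_sub_one_of_pos (by positivity)
  have h10 : (3:ℝ) / 2 * (2 / ε - 1) ≤ 2 / ε ^ 2 := by
    have hε2 : (0:ℝ) < ε ^ 2 := by positivity
    rw [le_div_iff₀ hε2]
    have h11 : (3:ℝ) / 2 * (2 / ε - 1) * ε ^ 2 = 3 * ε - 3 / 2 * ε ^ 2 := by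
      field_simp
    rw [h11]
    nlinarith [sq_nonneg (ε - 1)]
  linarith [mul_le_mul_of_nonneg_left hlog1 (by norm_num : (0:ℝ) ≤ 3 / 2)]

private lemma sqrt_eps_ineq {ε : ℝ} (h0 : 0 < ε) (h1 : ε < 1) :
    Real.sqrt ((2 - ε) / ε) ≤ 1 / ε ^ 2 := by
  calc Real.sqrt ((2 - ε) / ε) ≤ Real.sqrt (1 / ε ^ 4) :=
        Real.sqrt_le_sqrt (eps_cube_ineq h0 h1)
  _ = 1 / ε ^ 2 := by
      rw [show (1:ℝ) / ε ^ 4 = (1 / ε ^ 2) ^ 2 by ring]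
      exact Real.sqrt_sq (by positivity)

private lemma density_transfer {μ : Measure E} [IsFiniteMeasure μ]
    {ft : E → ℝ} (hft : ∀ a, 0 ≤ ft a)
    (hEnt : Integrable (fun a => ft a * Real.log (ft a)) μ)
    (hVarent : Integrable (fun a => ft a * Real.log (ft a) ^ 2) μ)
    {g : E → ℝ≥0∞} (hg : Measurable g) (hgfin : ∀ᵐ a ∂μ, g a < ∞)
    (hdens : μ.withDensity (fun a => ENNReal.ofReal (ft a)) = μ.withDensity g) :
    (fun a => (g a).toReal * Real.log ((g a).toReal)) =ᵐ[μ] (fun a => ft a * Real.log (ft a)) ∧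
    (fun a => (g a).toReal * Real.log ((g a).toReal) ^ 2)
      =ᵐ[μ] (fun a => ft a * Real.log (ft a) ^ 2) := by
  obtain ⟨ψt, hψm, hψe⟩ := hEnt.1
  obtain ⟨χt, hχm, hχe⟩ := hVarent.1
  set S : Set E := {a | ψt a = 0} ∩ {a | χt a = 0} with hSdef
  have hSm : MeasurableSet S :=
    (hψm.measurable (measurableSet_singleton 0)).inter
      (hχm.measurable (measurableSet_singleton 0))
  have hE1 : ∀ᵐ a ∂μ, ft a * Real.log (ft a) = ψt a ∧ ft a * Real.log (ft a) ^ 2 = χt a :=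
    hψe.and hχe
  -- pointwise facts
  have hpt01 : ∀ a, ft a * Real.log (ft a) = 0 → ft a = 0 ∨ ft a = 1 := by
    intro a h
    rcases mul_eq_zero.mp h with h | h
    · exact Or.inl h
    · rcases Real.log_eq_zero.mp h with h | h | h
      · exact Or.inl h
      · exact Or.inr h
      · exfalso; have := hft a; rw [h] at this; linarith
  have hptS : ∀ a, a ∉ S → ft a * Real.log (ft a) = ψt a → ft a * Real.log (ft a) ^ 2 = χt a →
      ft a = ψt a ^ 2 / χt a := by
    intro a haS hψ hχ
    have hne : ¬ (ft a = 0 ∨ Real.log (ft a) = 0) := by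
      intro hor
      apply haS
      have h1 : ft a * Real.log (ft a) = 0 := by rcases hor with h|h <;> simp [h]
      have h2 : ft a * Real.log (ft a) ^ 2 = 0 := by rcases hor with h|h <;> simp [h]
      exact ⟨by simp only [Set.mem_setOf_eq, ← hψ, h1], by simp only [Set.mem_setOf_eq, ← hχ, h2]⟩
    push_neg at hne
    obtain ⟨hf0, hl0⟩ := hne
    rw [← hψ, ← hχ]
    field_simp
  -- Claim 3 : g agrees with ofReal ∘ ft on Sᶜ
  have e0 : ∀ᵐ a ∂(μ.restrict Sᶜ), ft a = ψt a ^ 2 / χt a := by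
    filter_upwards [ae_restrict_of_ae hE1, ae_restrict_mem hSm.compl] with a ha haC
    exact hptS a haC ha.1 ha.2
  have hf1meas : Measurable fun a => ENNReal.ofReal (ψt a ^ 2 / χt a) :=
    ENNReal.measurable_ofReal.comp ((hψm.measurable.pow_const 2).div hχm.measurable)
  have e2 : (fun a => ENNReal.ofReal (ft a)) =ᵐ[μ.restrict Sᶜ]
      (fun a => ENNReal.ofReal (ψt a ^ 2 / χt a)) := by
    filter_upwards [e0] with a ha; rw [ha]
  have e1 : (μ.restrict Sᶜ).withDensity (fun a => ENNReal.ofReal (ψt a ^ 2 / χt a)) =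
      (μ.restrict Sᶜ).withDensity g := by
    rw [← withDensity_congr_ae e2, ← restrict_withDensity hSm.compl,
      ← restrict_withDensity hSm.compl, hdens]
  have hgc : g =ᵐ[μ.restrict Sᶜ] (fun a => ENNReal.ofReal (ft a)) := by
    have h := (withDensity_eq_iff_of_sigmaFinite hf1meas.aemeasurable hg.aemeasurable).mp e1
    exact (h.symm.trans e2.symm)
  -- Claim 4 : on S, g takes a.e. values in {0,1}
  have hfS01 : ∀ᵐ a ∂μ, a ∈ S → (ft a = 0 ∨ ft a = 1) := by
    filter_upwards [hE1] with a ha haS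
    exact hpt01 a (by rw [ha.1]; exact haS.1)
  set T : Set E := {a | a ∈ S ∧ 1/2 < ft a} with hTdef
  set U : Set E := toMeasurable μ (S \ T) with hUdef
  set T₀ : Set E := S \ U with hT₀def
  have hUm : MeasurableSet U := measurableSet_toMeasurable μ _
  have hT₀m : MeasurableSet T₀ := hSm.diff hUm
  have hT₀T : ∀ a ∈ T₀, 1/2 < ft a := by
    intro a ha
    have h1 : a ∉ S \ T := fun h => ha.2 (subset_toMeasurable μ _ h)
    have h2 : a ∈ T := by
      by_contra h3
      exact h1 ⟨ha.1, h3⟩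
    exact h2.2
  obtain ⟨N, hN_sub, hNm, hNnull⟩ : ∃ N, {a | ¬(a ∈ S → (ft a = 0 ∨ ft a = 1))} ⊆ N ∧
      MeasurableSet N ∧ μ N = 0 := by
    refine ⟨toMeasurable μ _, subset_toMeasurable _ _, measurableSet_toMeasurable _ _, ?_⟩
    rw [measure_toMeasurable]
    exact ae_iff.mp hfS01
  have key4a : ∀ A : Set E, MeasurableSet A →
      (μ.withDensity (fun a => ENNReal.ofReal (ft a))) (A ∩ S) = μ (A ∩ T₀) := by
    intro A hA
    rw [withDensity_apply _ (hA.inter hSm)]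
    have hone : ∀ᵐ a ∂(μ.restrict (A ∩ T₀)), ENNReal.ofReal (ft a) = 1 := by
      filter_upwards [ae_restrict_of_ae hfS01, ae_restrict_mem (hA.inter hT₀m)] with a ha hmem
      have h01 := ha hmem.2.1
      have hhalf := hT₀T a hmem.2
      rcases h01 with h|h
      · exfalso; rw [h] at hhalf; linarith
      · rw [h]; simp
    have h1 : ∫⁻ a in A ∩ T₀, ENNReal.ofReal (ft a) ∂μ = μ (A ∩ T₀) := by
      rw [lintegral_congr_ae hone, setLIntegral_one]
    have hsplit : A ∩ S = (A ∩ T₀) ∪ (A ∩ (S ∩ U)) := by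
      rw [← Set.inter_union_distrib_left]
      congr 1
      rw [hT₀def, Set.diff_union_inter]
    have hdisj : Disjoint (A ∩ T₀) (A ∩ (S ∩ U)) := by
      rw [Set.disjoint_left]
      rintro a ⟨_, haT⟩ ⟨_, _, haU⟩
      exact haT.2 haU
    rw [hsplit, lintegral_union (hA.inter (hSm.inter hUm)) hdisj, h1]
    have h2 : ∫⁻ a in A ∩ (S ∩ U), ENNReal.ofReal (ft a) ∂μ = 0 := by
      refine le_antisymm ?_ zero_le
      refine le_trans (lintegral_mono_set Set.inter_subset_right) ?_
      rw [← lintegral_indicator (hSm.inter hUm)]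
      rw [MeasureTheory.lintegral_def]
      refine iSup₂_le fun φ hφ => ?_
      have hMm : MeasurableSet ({a | φ a ≠ 0} \ N) :=
        ((φ.measurable (measurableSet_singleton 0)).compl).diff hNm
      have hMT : ∀ a ∈ {a | φ a ≠ 0} \ N, a ∈ T ∧ a ∈ U := by
        rintro a ⟨haφ, haN⟩
        have hind : (S ∩ U).indicator (fun a => ENNReal.ofReal (ft a)) a ≠ 0 := by
          intro h0
          exact haφ (le_antisymm (h0 ▸ hφ a) zero_le)
        have haSU : a ∈ S ∩ U := by
          by_contra hcon
          exact hind (Set.indicator_of_notMem hcon _)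
        have hfta : 0 < ft a := by
          rw [Set.indicator_of_mem haSU] at hind
          rcases lt_or_eq_of_le (hft a) with h|h
          · exact h
          · exfalso; exact hind (by rw [← h]; simp)
        have hft1 : ft a = 1 := by
          have := not_not.mp (fun hcon => haN (hN_sub (fun h => hcon h)))
          rcases this haSU.1 with h|h
          · exfalso; linarith
          · exact h
        exact ⟨⟨haSU.1, by rw [hft1]; norm_num⟩, haSU.2⟩
      have hMnull : μ ({a | φ a ≠ 0} \ N) = 0 := by
        have hdisj2 : ({a | φ a ≠ 0} \ N) ∩ (S \ T) = ∅ := by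
          rw [Set.eq_empty_iff_forall_notMem]
          rintro a ⟨haM, _, haT⟩
          exact haT (hMT a haM).1
        have := meas_inter_toMeasurable_eq_zero (μ := μ) hMm hdisj2
        rw [← hUdef] at this
        have heq : ({a | φ a ≠ 0} \ N) ∩ U = {a | φ a ≠ 0} \ N :=
          Set.inter_eq_self_of_subset_left (fun a ha => (hMT a ha).2)
        rwa [heq] at this
      have hφ0 : ∀ᵐ a ∂μ, φ a = 0 := by
        rw [ae_iff]
        refine measure_mono_null (fun a ha => ?_) (measure_union_null hMnull hNnull)
        by_cases haN : a ∈ N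
        · exact Or.inr haN
        · exact Or.inl ⟨ha, haN⟩
      refine le_of_eq ?_
      calc φ.lintegral μ = ∫⁻ a, φ a ∂μ := (SimpleFunc.lintegral_eq_lintegral φ μ).symm
      _ = 0 := by rw [lintegral_congr_ae hφ0]; simp
    rw [h2, add_zero]
  have key4b : ∀ᵐ a ∂(μ.restrict S), g a = Set.indicator T₀ (fun _ => (1:ℝ≥0∞)) a := by
    have hmeq : (μ.restrict S).withDensity g =
        (μ.restrict S).withDensity (Set.indicator T₀ (fun _ => (1:ℝ≥0∞))) := by
      ext B hB
      rw [withDensity_apply _ hB, withDensity_apply _ hB, Measure.restrict_restrict hB]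
      have hl : ∫⁻ a in B ∩ S, g a ∂μ = μ (B ∩ T₀) := by
        rw [← withDensity_apply _ (hB.inter hSm), ← hdens]
        exact key4a B hB
      have hr : ∫⁻ a in B ∩ S, Set.indicator T₀ (fun _ => (1:ℝ≥0∞)) a ∂μ = μ (B ∩ T₀) := by
        rw [lintegral_indicator hT₀m, setLIntegral_one, Measure.restrict_apply hT₀m]
        congr 1
        ext a
        exact ⟨fun ⟨h1, h2⟩ => ⟨h2.1, h1⟩, fun ⟨h1, h2⟩ => ⟨h2, h1, h2.1⟩⟩
      rw [hl, hr]
    exact (withDensity_eq_iff_of_sigmaFinite hg.aemeasurable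
      ((measurable_one.indicator hT₀m).aemeasurable)).mp hmeq
  -- assembly
  have hmain : ∀ᵐ a ∂μ, ((g a).toReal * Real.log ((g a).toReal) = ft a * Real.log (ft a) ∧
      (g a).toReal * Real.log ((g a).toReal) ^ 2 = ft a * Real.log (ft a) ^ 2) := by
    refine ae_of_ae_restrict_of_ae_restrict_compl S ?_ ?_
    · filter_upwards [key4b, ae_restrict_of_ae hE1, ae_restrict_mem hSm,
        ae_restrict_of_ae hfS01] with a hg01 hEq hmemS hft01
      have hfa := hft01 hmemS
      have hL : ft a * Real.log (ft a) = 0 := by rcases hfa with h|h <;> simp [h]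
      have hL2 : ft a * Real.log (ft a) ^ 2 = 0 := by rcases hfa with h|h <;> simp [h]
      have hg01' : (g a).toReal = 0 ∨ (g a).toReal = 1 := by
        by_cases haT : a ∈ T₀
        · rw [hg01, Set.indicator_of_mem haT]; right; simp
        · rw [hg01, Set.indicator_of_notMem haT]; left; simp
      have hgL : (g a).toReal * Real.log ((g a).toReal) = 0 := by
        rcases hg01' with h|h <;> simp [h]
      have hgL2 : (g a).toReal * Real.log ((g a).toReal) ^ 2 = 0 := by
        rcases hg01' with h|h <;> simp [h]
      rw [hgL, hL, hgL2, hL2]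
      exact ⟨rfl, rfl⟩
    · filter_upwards [hgc] with a hga
      have heq : (g a).toReal = ft a := by rw [hga]; exact ENNReal.toReal_ofReal (hft a)
      rw [heq]
      exact ⟨rfl, rfl⟩
  exact ⟨hmain.mono fun a h => h.1, hmain.mono fun a h => h.2⟩


set_option maxHeartbeats 1000000

/-- **Varentropy bound on the mixing window.** For the process started at `x`, if at
some time `t > 0` one has `TV(X_t) ≤ 1 − ε`, the density `f_t` exists and
`Ent(X_t)`, `Varent(X_t)` are finite, then
`t_mix(ε) ≤ t + 2/(λε²) + √(Varent(X_t))/(λε²)`. -/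
theorem varentropy_mixing_window
    (F : Framework E) (x : E) (lam : ℝ) (hlam : 0 < lam) (hgap : HasSpectralGap F lam)
    (ε : ℝ) (hε : ε ∈ Set.Ioo (0 : ℝ) 1) (t : ℝ) (ht : 0 < t)
    (ft : E → ℝ) (hft : ∀ a, 0 ≤ ft a)
    (hdens : (F.κ t) x = F.μ.withDensity fun a => ENNReal.ofReal (ft a))
    (hEnt : Integrable (fun a => ft a * Real.log (ft a)) F.μ)
    (hVarent : Integrable (fun a => ft a * (Real.log (ft a)) ^ 2) F.μ)
    (htv : tvDist ((F.κ t) x) F.μ ≤ 1 - ε) :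
    tmix F x ε ≤
      ENNReal.ofReal (t + 2 / (lam * ε ^ 2) +
        Real.sqrt ((∫ a, ft a * (Real.log (ft a)) ^ 2 ∂F.μ)
          - (∫ a, ft a * Real.log (ft a) ∂F.μ) ^ 2) / (lam * ε ^ 2)) := by
  haveI := F.isProb
  haveI := F.isMarkov t
  obtain ⟨hε0, hε1⟩ := hε
  set ν : Measure E := F.κ t x with hνdef
  haveI : IsProbabilityMeasure ν := by rw [hνdef]; infer_instance
  have hac : ν ≪ F.μ := by
    intro s hs0
    have hs0' : F.μ (toMeasurable F.μ s) = 0 := by rwa [measure_toMeasurable]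
    refine measure_mono_null (subset_toMeasurable F.μ s) ?_
    rw [hdens, withDensity_apply _ (measurableSet_toMeasurable F.μ s),
      Measure.restrict_eq_zero.mpr hs0', lintegral_zero_measure]
  set dd : E → ℝ≥0∞ := ν.rnDeriv F.μ with hdd
  have hdm : Measurable dd := Measure.measurable_rnDeriv ν F.μ
  have hνd : F.μ.withDensity dd = ν := Measure.withDensity_rnDeriv_eq ν F.μ hac
  have hfin : ∀ᵐ a ∂F.μ, dd a < ∞ := Measure.rnDeriv_lt_top ν F.μ
  set gr : E → ℝ := fun a => (dd a).toReal with hgr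
  have hgrm : Measurable gr := hdm.ennreal_toReal
  have hgrnn : ∀ a, 0 ≤ gr a := fun a => ENNReal.toReal_nonneg
  have hdd_eq : (F.μ.withDensity fun a => ENNReal.ofReal (ft a)) = F.μ.withDensity dd := by
    rw [← hdens]; exact hνd.symm
  obtain ⟨htr1, htr2⟩ := density_transfer hft hEnt hVarent hdm hfin hdd_eq
  set m : ℝ := ∫ a, ft a * Real.log (ft a) ∂F.μ with hm
  set Vr : ℝ := (∫ a, ft a * Real.log (ft a) ^ 2 ∂F.μ) - m ^ 2 with hVr
  have hEnt' : Integrable (fun a => gr a * Real.log (gr a)) F.μ := hEnt.congr htr1.symm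
  have hVar' : Integrable (fun a => gr a * Real.log (gr a) ^ 2) F.μ := hVarent.congr htr2.symm
  have hint_m : ∫ a, gr a * Real.log (gr a) ∂F.μ = m := by rw [hm]; exact integral_congr_ae htr1
  have hint_V : ∫ a, gr a * Real.log (gr a) ^ 2 ∂F.μ = m ^ 2 + Vr := by
    rw [integral_congr_ae htr2, hVr]; ring
  set L : E → ℝ := fun a => Real.log (gr a) with hLdef
  have hLm : Measurable L := Real.measurable_log.comp hgrm
  set gn : E → ℝ≥0 := fun a => (dd a).toNNReal with hgn
  have hgnm : Measurable gn := hdm.ennreal_toNNReal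
  have hνd' : F.μ.withDensity (fun a => (gn a : ℝ≥0∞)) = ν := by
    rw [← hνd]; apply withDensity_congr_ae
    filter_upwards [hfin] with a ha
    exact ENNReal.coe_toNNReal ha.ne
  have hsmul : ∀ (φ : E → ℝ) (a : E), gn a • φ a = gr a * φ a := by
    intro φ a; rw [NNReal.smul_def]; rfl
  have hti : ∀ φ : E → ℝ, ∫ a, φ a ∂ν = ∫ a, gr a * φ a ∂F.μ := by
    intro φ
    rw [← hνd', integral_withDensity_eq_integral_smul hgnm]
    exact integral_congr_ae (Eventually.of_forall fun a => hsmul φ a)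
  have hmom1 : ∫ a, L a ∂ν = m := by rw [hti L]; exact hint_m
  have hmom2 : ∫ a, L a ^ 2 ∂ν = m ^ 2 + Vr := by rw [hti]; exact hint_V
  have hIL : Integrable L ν := by
    rw [← hνd', integrable_withDensity_iff_integrable_smul hgnm]
    exact hEnt'.congr (Eventually.of_forall fun a => (hsmul L a).symm)
  have hIL2 : Integrable (fun a => L a ^ 2) ν := by
    rw [← hνd', integrable_withDensity_iff_integrable_smul hgnm]
    exact hVar'.congr (Eventually.of_forall fun a => (hsmul (fun y => L y ^ 2) a).symm)
  have hVnn : 0 ≤ Vr := var_nonneg hIL hIL2 hmom1 hmom2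
  set W : ℝ := Real.sqrt Vr with hW
  have hWnn : 0 ≤ W := Real.sqrt_nonneg _
  have hW2 : W ^ 2 = Vr := Real.sq_sqrt hVnn
  set ap : ℝ := W * Real.sqrt ((2 - ε) / ε) with hap
  have hapnn : 0 ≤ ap := mul_nonneg hWnn (Real.sqrt_nonneg _)
  have h2ε : (0:ℝ) ≤ (2 - ε) / ε := by
    apply div_nonneg _ hε0.le; linarith
  have hap2 : Vr + ap ^ 2 = Vr * (2 / ε) := by
    rw [hap, mul_pow, Real.sq_sqrt h2ε, hW2]
    field_simp
    ring
  have htail_le : Vr / (Vr + ap ^ 2) ≤ ε / 2 := by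
    rcases eq_or_lt_of_le hVnn with h0 | hpos
    · rw [← h0]; simp; positivity
    · rw [hap2, div_mul_eq_div_div, div_self hpos.ne', one_div_div]
  have htail1 : (ν {y | L y - m > ap}).toReal ≤ ε / 2 :=
    le_trans (cantelli hLm hIL hIL2 hmom1 hmom2 hapnn) htail_le
  have htail2 : (ν {y | m - L y > ap}).toReal ≤ ε / 2 := by
    have hsq : ∀ y : E, L y ^ 2 = (-L y) ^ 2 := fun y => by ring
    have hm' : ∫ y, -L y ∂ν = -m := by rw [integral_neg, hmom1]
    have hV' : ∫ y, (-L y) ^ 2 ∂ν = (-m) ^ 2 + Vr := by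
      rw [show (fun y : E => (-L y) ^ 2) = fun y : E => L y ^ 2 from funext fun y => (hsq y).symm,
        hmom2, neg_pow_two]
    have hI2' : Integrable (fun y => (-L y) ^ 2) ν :=
      hIL2.congr (Eventually.of_forall fun y => hsq y)
    have hcant := cantelli (G := fun y => -L y) hLm.neg hIL.neg hI2' hm' hV' hapnn
    have hset : {y | -L y - -m > ap} = {y | m - L y > ap} := by
      ext y; simp only [Set.mem_setOf_eq]; constructor <;> intro h <;> linarith
    rw [hset] at hcant
    exact le_trans hcant htail_le
  -- integrability of the density
  have hgr_int : Integrable gr F.μ := by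
    refine integrable_toReal_of_lintegral_ne_top hdm.aemeasurable ?_
    rw [Measure.lintegral_rnDeriv hac]
    exact measure_ne_top ν _
  have hgr_int1 : ∫ a, gr a ∂F.μ = 1 := by
    rw [integral_toReal hdm.aemeasurable hfin, Measure.lintegral_rnDeriv hac]
    simp
  have hν_gr0 : ν {a | gr a = 0} = 0 := by
    have hsub : {a | gr a = 0} ⊆ {a | dd a = 0} ∪ {a | dd a = ∞} := by
      intro a ha
      rcases ENNReal.toReal_eq_zero_iff (dd a) |>.mp ha with h | h
      · exact Or.inl h
      · exact Or.inr h
    have h1 : ν {a | dd a = ∞} = 0 := by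
      refine hac ?_
      have := ae_iff.mp hfin
      refine measure_mono_null (fun a ha => ?_) this
      simp only [Set.mem_setOf_eq] at ha ⊢
      rw [ha]; exact lt_irrefl _
    have h2 : ν {a | dd a = 0} = 0 := by
      have hms : MeasurableSet {a | dd a = 0} := hdm (measurableSet_singleton 0)
      rw [← hνd, withDensity_apply _ hms]
      have : ∀ᵐ a ∂(F.μ.restrict {a | dd a = 0}), dd a = 0 := ae_restrict_mem hms
      rw [lintegral_congr_ae this]
      simp
    refine measure_mono_null hsub ?_
    exact measure_union_null h2 h1
  -- boundedness of the tv family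
  have hbdd : BddAbove (Set.range fun A : {A : Set E // MeasurableSet A} =>
      |(ν A.1).toReal - (F.μ A.1).toReal|) := by
    refine ⟨1, fun r hr => ?_⟩
    obtain ⟨A, rfl⟩ := hr
    have h1 : (ν A.1).toReal ≤ 1 := by
      rw [← ENNReal.toReal_one]
      exact ENNReal.toReal_mono ENNReal.one_ne_top prob_le_one
    have h2 : (F.μ A.1).toReal ≤ 1 := by
      rw [← ENNReal.toReal_one]
      exact ENNReal.toReal_mono ENNReal.one_ne_top prob_le_one
    have h3 : (0:ℝ) ≤ (ν A.1).toReal := ENNReal.toReal_nonneg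
    have h4 : (0:ℝ) ≤ (F.μ A.1).toReal := ENNReal.toReal_nonneg
    rw [abs_le]; constructor <;> linarith
  -- entropy bound from the TV hypothesis
  have hm_le : m ≤ ap + Real.log (2 / ε) := by
    set θ : ℝ := m - ap with hθ
    set As : Set E := {a | Real.exp θ ≤ gr a} with hAs
    have hAsm : MeasurableSet As := measurableSet_le measurable_const hgrm
    have hμAs : (F.μ As).toReal ≤ Real.exp (-θ) := by
      have h := mul_meas_ge_le_integral_of_nonneg (μ := F.μ) (f := gr)
        (Eventually.of_forall hgrnn) hgr_int (Real.exp θ)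
      rw [hgr_int1] at h
      rw [Real.exp_neg]
      have hexp : (0:ℝ) < Real.exp θ := Real.exp_pos θ
      calc (F.μ As).toReal = (Real.exp θ)⁻¹ * (Real.exp θ * (F.μ As).toReal) := by
            field_simp
      _ ≤ (Real.exp θ)⁻¹ * 1 := by
            refine mul_le_mul_of_nonneg_left ?_ (by positivity)
            exact h
      _ = (Real.exp θ)⁻¹ := mul_one _
    have hνAc : (ν Asᶜ).toReal ≤ ε / 2 := by
      have hsub : Asᶜ ⊆ {a | m - L a > ap} ∪ {a | gr a = 0} := by
        intro a ha
        simp only [hAs, Set.mem_compl_iff, Set.mem_setOf_eq, not_le] at ha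
        rcases eq_or_lt_of_le (hgrnn a) with h0 | hpos
        · exact Or.inr h0.symm
        · left
          have : L a < θ := by
            have h5 := Real.log_lt_log hpos ha
            rwa [Real.log_exp] at h5
          simp only [Set.mem_setOf_eq]
          rw [hθ] at this
          linarith
      have h6 : ν Asᶜ ≤ ν {a | m - L a > ap} := by
        refine le_trans (measure_mono hsub) ?_
        refine le_trans (measure_union_le _ _) ?_
        rw [hν_gr0, add_zero]
      exact le_trans (ENNReal.toReal_mono (measure_ne_top ν _) h6) htail2
    have hAsum : (ν As).toReal + (ν Asᶜ).toReal = 1 := by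
      rw [← ENNReal.toReal_add (measure_ne_top ν _) (measure_ne_top ν _),
        measure_add_measure_compl hAsm]
      simp
    have habs : (ν As).toReal - (F.μ As).toReal ≤ 1 - ε := by
      refine le_trans (le_abs_self _) (le_trans ?_ htv)
      exact le_ciSup hbdd (⟨As, hAsm⟩ : {A : Set E // MeasurableSet A})
    have hεexp : ε / 2 ≤ Real.exp (-θ) := by linarith
    have hθ_le : θ ≤ Real.log (2 / ε) := by
      have h7 : Real.log (ε / 2) ≤ -θ := by
        have := Real.log_le_log (by positivity) hεexp
        rwa [Real.log_exp] at this
      have h8 : Real.log (2 / ε) = -Real.log (ε / 2) := by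
        rw [← Real.log_inv]
        congr 1
        rw [inv_div]
      rw [h8]; linarith
    rw [hθ] at hθ_le; linarith
  -- the waiting time
  have hD : (0:ℝ) < lam * ε ^ 2 := by positivity
  set hh : ℝ := (2 + W) / (lam * ε ^ 2) with hhdef
  have hh_pos : 0 < hh := by positivity
  haveI := F.isMarkov hh
  haveI := F.isMarkov (t + hh)
  set K : ℝ := m + ap with hK
  -- the key arithmetic inequality
  have harith : K / 2 - lam * hh ≤ Real.log (ε / 2) := by
    have hlam_hh : lam * hh = (2 + W) / ε ^ 2 := by
      rw [hhdef]
      field_simp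
    have hap_le : ap ≤ W / ε ^ 2 := by
      rw [hap, div_eq_mul_one_div W (ε ^ 2)]
      exact mul_le_mul_of_nonneg_left (sqrt_eps_ineq hε0 hε1) hWnn
    have hlog2 : (3:ℝ) / 2 * Real.log (2 / ε) ≤ 2 / ε ^ 2 := log_budget hε0 hε1
    have hlogpos : Real.log (ε / 2) = -Real.log (2 / ε) := by
      rw [← Real.log_inv]; congr 1; rw [inv_div]
    rw [hlogpos, hlam_hh, hK]
    have hm2 : m ≤ ap + Real.log (2 / ε) := hm_le
    have hfinal : ap + (3 / 2) * Real.log (2 / ε) ≤ (2 + W) / ε ^ 2 := by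
      rw [add_div]
      have := hlog2
      have := hap_le
      linarith
    linarith
  -- estimate for each measurable set at time t + hh
  have hest : ∀ A : Set E, MeasurableSet A →
      |((F.κ (t + hh)) x A).toReal - (F.μ A).toReal| ≤ ε := by
    intro A hA
    set c : ℝ := (F.μ A).toReal with hc
    have hc0 : (0:ℝ) ≤ c := ENNReal.toReal_nonneg
    have hc1 : c ≤ 1 := by
      rw [hc, ← ENNReal.toReal_one]
      exact ENNReal.toReal_mono ENNReal.one_ne_top prob_le_one
    set ψA : E → ℝ := fun y => ((F.κ hh) y A).toReal with hψAdef
    have hψAm : Measurable ψA := (Kernel.measurable_coe _ hA).ennreal_toReal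
    have hψA0 : ∀ y, 0 ≤ ψA y := fun y => ENNReal.toReal_nonneg
    have hψA1 : ∀ y, ψA y ≤ 1 := fun y => by
      rw [hψAdef, ← ENNReal.toReal_one]
      exact ENNReal.toReal_mono ENNReal.one_ne_top prob_le_one
    set η : E → ℝ := fun y => ψA y - c with hηdef
    have hηm : Measurable η := hψAm.sub measurable_const
    have hη1 : ∀ y, |η y| ≤ 1 := fun y =>
      abs_le.mpr ⟨by simp only [hηdef]; linarith only [hψA0 y, hc1],
        by simp only [hηdef]; linarith only [hψA1 y, hc0]⟩
    have hψAint : ∀ (P : Measure E), IsProbabilityMeasure P → Integrable ψA P := by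
      intro P hP
      refine (integrable_const (1:ℝ)).mono' hψAm.aestronglyMeasurable
        (Eventually.of_forall fun y => ?_)
      rw [Real.norm_eq_abs, abs_of_nonneg (hψA0 y)]; exact hψA1 y
    have hbint : ∀ (P : Measure E), IsProbabilityMeasure P → Integrable η P := by
      intro P hP
      refine (integrable_const (1:ℝ)).mono' hηm.aestronglyMeasurable
        (Eventually.of_forall fun y => ?_)
      rw [Real.norm_eq_abs]; exact hη1 y
    -- composition identity
    have hcomp : (F.κ (t + hh)) x A = ∫⁻ y, (F.κ hh) y A ∂ν := by
      rw [F.semigroup t hh ht.le hh_pos.le, Kernel.comp_apply,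
        Measure.bind_apply hA (Kernel.measurable _).aemeasurable]
    have hνuA : ((F.κ (t + hh)) x A).toReal = ∫ y, ψA y ∂ν := by
      rw [hcomp, ← integral_toReal ((Kernel.measurable_coe _ hA).aemeasurable)
        (Eventually.of_forall fun y => measure_lt_top _ _)]
    -- invariance
    have hinv : ∫ y, ψA y ∂F.μ = c := by
      have h := F.reversible hh hh_pos.le Set.univ A MeasurableSet.univ hA
      rw [Measure.restrict_univ] at h
      have hone : ∀ y : E, ((F.κ hh) y Set.univ).toReal = 1 := fun y => by
        rw [measure_univ, ENNReal.toReal_one]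
      calc ∫ y, ψA y ∂F.μ = ∫ y in A, ((F.κ hh) y Set.univ).toReal ∂F.μ := h
      _ = ∫ _ in A, (1:ℝ) ∂F.μ := by simp [hone]
      _ = c := by rw [setIntegral_const, smul_eq_mul, mul_one]; rfl
    have hη0μ : ∫ y, η y ∂F.μ = 0 := by
      have h1 : ∫ y, η y ∂F.μ = ∫ y, ψA y ∂F.μ - ∫ _, c ∂F.μ :=
        integral_sub (hψAint F.μ ‹_›) (integrable_const c)
      rw [h1, hinv, integral_const]
      simp [measureReal_def]
    have hην : ∫ y, η y ∂ν = ∫ y, ψA y ∂ν - c := by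
      rw [show ∫ y, η y ∂ν = ∫ y, ψA y ∂ν - ∫ _, c ∂ν from
        integral_sub (hψAint ν ‹_›) (integrable_const c), integral_const]
      simp
    -- spectral gap applied to the centered indicator
    set f0 : E → ℝ := fun y => Set.indicator A (1 : E → ℝ) y - c with hf0def
    have hf0m : Measurable f0 := (measurable_const.indicator hA).sub measurable_const
    have hf0b : ∀ y, |f0 y| ≤ 1 := by
      intro y
      simp only [hf0def]
      by_cases hy : y ∈ A
      · rw [Set.indicator_of_mem hy, abs_le, Pi.one_apply]
        exact ⟨by linarith only [hc1], by linarith only [hc0]⟩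
      · rw [Set.indicator_of_notMem hy, abs_le]
        exact ⟨by linarith only [hc1], by linarith only [hc0]⟩
    have hf0mem : MemLp f0 2 F.μ :=
      MemLp.of_bound hf0m.aestronglyMeasurable 1 (Eventually.of_forall fun y => by
        rw [Real.norm_eq_abs]; exact hf0b y)
    have hf0int0 : ∫ y, f0 y ∂F.μ = 0 := by
      have h1 : ∫ y, f0 y ∂F.μ = ∫ y, Set.indicator A (1 : E → ℝ) y ∂F.μ - ∫ _, c ∂F.μ :=
        integral_sub ((integrable_const (1:ℝ)).indicator hA) (integrable_const c)
      rw [h1, integral_indicator_one hA, integral_const]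
      simp [hc, measureReal_def]
    have hPop : Pop F.κ hh f0 = η := by
      funext y
      show ∫ z, f0 z ∂((F.κ hh) y) = η y
      have h1 : ∫ z, f0 z ∂((F.κ hh) y) =
          ∫ z, Set.indicator A (1 : E → ℝ) z ∂((F.κ hh) y) - ∫ _, c ∂((F.κ hh) y) :=
        integral_sub ((integrable_const (1:ℝ)).indicator hA) (integrable_const c)
      rw [h1, integral_indicator_one hA, integral_const]
      simp [hηdef, hψAdef, measureReal_def]
    have hgapA := hgap f0 hf0mem hf0int0 hh hh_pos.le
    rw [hPop] at hgapA
    have hf0elp : eLpNorm f0 2 F.μ ≤ 1 := by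
      refine le_trans (eLpNorm_le_of_ae_bound (C := 1) (Eventually.of_forall fun y => by
        rw [Real.norm_eq_abs]; exact hf0b y)) ?_
      simp
    have hη2 : eLpNorm η 2 F.μ ≤ ENNReal.ofReal (Real.exp (-lam * hh)) := by
      refine le_trans hgapA ?_
      calc ENNReal.ofReal (Real.exp (-lam * hh)) * eLpNorm f0 2 F.μ
          ≤ ENNReal.ofReal (Real.exp (-lam * hh)) * 1 := by gcongr
      _ = _ := mul_one _
    -- split the integral at the density level exp K
    set G : Set E := {a | gr a ≤ Real.exp K} with hGdef
    have hGm : MeasurableSet G := measurableSet_le hgrm measurable_const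
    have hsplit2 : ∫ y, η y ∂ν = ∫ y in G, η y ∂ν + ∫ y in Gᶜ, η y ∂ν :=
      (integral_add_compl hGm (hbint ν ‹_›)).symm
    -- tail part
    have htailpart : |∫ y in Gᶜ, η y ∂ν| ≤ ε / 2 := by
      have h1 : ‖∫ y in Gᶜ, η y ∂ν‖ ≤ 1 * (ν Gᶜ).toReal :=
        norm_setIntegral_le_of_norm_le_const (measure_lt_top _ _)
          (fun y _ => by rw [Real.norm_eq_abs]; exact hη1 y)
      rw [Real.norm_eq_abs, one_mul] at h1
      refine le_trans h1 ?_
      have h2 : ν Gᶜ ≤ ν {y | L y - m > ap} := by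
        refine measure_mono fun a ha => ?_
        simp only [hGdef, Set.mem_compl_iff, Set.mem_setOf_eq, not_le] at ha
        have hKL : K < L a := by
          have h5 := Real.log_lt_log (Real.exp_pos K) ha
          rwa [Real.log_exp] at h5
        simp only [Set.mem_setOf_eq]
        rw [hK] at hKL
        linarith only [hKL]
      exact le_trans (ENNReal.toReal_mono (measure_ne_top ν _) h2) htail1
    -- main part, via Cauchy-Schwarz
    have hmainpart : |∫ y in G, η y ∂ν| ≤ Real.exp (K / 2) * Real.exp (-lam * hh) := by
      have e1 : ∫ y in G, η y ∂ν = ∫ y, gr y * G.indicator η y ∂F.μ := by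
        rw [← integral_indicator hGm, ← hνd', integral_withDensity_eq_integral_smul hgnm]
        exact integral_congr_ae (Eventually.of_forall fun a => hsmul _ a)
      rw [e1]
      have habs : |∫ y, gr y * G.indicator η y ∂F.μ| ≤ ∫ y, |gr y * G.indicator η y| ∂F.μ := by
        rw [← Real.norm_eq_abs]
        refine le_trans (norm_integral_le_integral_norm _) ?_
        refine le_of_eq (integral_congr_ae (Eventually.of_forall fun y => ?_))
        simp only [Real.norm_eq_abs]
      have habs2 : ∫ y, |gr y * G.indicator η y| ∂F.μ = ∫ y, gr y * |G.indicator η y| ∂F.μ :=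
        integral_congr_ae (Eventually.of_forall fun y => by
          simp only [abs_mul, abs_of_nonneg (hgrnn y)])
      have hq2m : Measurable fun a => (‖η a‖₊ : ℝ≥0∞) := hηm.nnnorm.coe_nnreal_ennreal
      have hq1m : Measurable fun a => ENNReal.ofReal (G.indicator gr a) :=
        ENNReal.measurable_ofReal.comp (hgrm.indicator hGm)
      have hint_meas : Measurable fun y => gr y * |G.indicator η y| :=
        hgrm.mul ((hηm.indicator hGm).abs)
      have e3 : ∫ y, gr y * |G.indicator η y| ∂F.μ =
          (∫⁻ y, ENNReal.ofReal (G.indicator gr y) * (‖η y‖₊ : ℝ≥0∞) ∂F.μ).toReal := by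
        rw [integral_eq_lintegral_of_nonneg_ae (Eventually.of_forall fun y => by positivity)
          hint_meas.aestronglyMeasurable]
        congr 1
        refine lintegral_congr fun a => ?_
        by_cases haG : a ∈ G
        · rw [Set.indicator_of_mem haG, Set.indicator_of_mem haG,
            ENNReal.ofReal_mul (hgrnn a), (show ((‖η a‖₊ : ℝ≥0∞)) = ENNReal.ofReal |η a| from Real.enorm_eq_ofReal_abs _)]
        · rw [Set.indicator_of_notMem haG, Set.indicator_of_notMem haG]
          simp
      have hconj : Real.HolderConjugate 2 2 := Real.HolderConjugate.two_two
      have hCS : ∫⁻ y, ENNReal.ofReal (G.indicator gr y) * (‖η y‖₊ : ℝ≥0∞) ∂F.μ ≤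
          (∫⁻ y, ENNReal.ofReal (G.indicator gr y) ^ (2:ℝ) ∂F.μ) ^ (1/(2:ℝ)) *
          (∫⁻ y, (‖η y‖₊ : ℝ≥0∞) ^ (2:ℝ) ∂F.μ) ^ (1/(2:ℝ)) :=
        ENNReal.lintegral_mul_le_Lp_mul_Lq F.μ hconj hq1m.aemeasurable hq2m.aemeasurable
      have hQ1 : (∫⁻ y, ENNReal.ofReal (G.indicator gr y) ^ (2:ℝ) ∂F.μ) ≤
          ENNReal.ofReal (Real.exp K) := by
        have hpt : ∀ y, ENNReal.ofReal (G.indicator gr y) ^ (2:ℝ) ≤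
            ENNReal.ofReal (Real.exp K * gr y) := by
          intro y
          rw [ENNReal.ofReal_rpow_of_nonneg (Set.indicator_apply_nonneg fun _ => hgrnn y)
            (by norm_num : (0:ℝ) ≤ 2)]
          refine ENNReal.ofReal_le_ofReal ?_
          rw [Real.rpow_two]
          by_cases haG : y ∈ G
          · rw [Set.indicator_of_mem haG]
            have h6 : gr y ≤ Real.exp K := haG
            rw [sq]
            exact mul_le_mul_of_nonneg_right h6 (hgrnn y)
          · rw [Set.indicator_of_notMem haG]
            have h7 : (0:ℝ) ≤ Real.exp K * gr y :=
              mul_nonneg (Real.exp_pos K).le (hgrnn y)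
            simpa using h7
        refine le_trans (lintegral_mono hpt) ?_
        have hmul : ∀ y, ENNReal.ofReal (Real.exp K * gr y) =
            ENNReal.ofReal (Real.exp K) * ENNReal.ofReal (gr y) :=
          fun y => ENNReal.ofReal_mul (Real.exp_pos K).le
        simp_rw [hmul]
        rw [lintegral_const_mul _ hgrm.ennreal_ofReal]
        have hgr1 : ∫⁻ y, ENNReal.ofReal (gr y) ∂F.μ = 1 := by
          have he : ∀ᵐ y ∂F.μ, ENNReal.ofReal (gr y) = dd y := by
            filter_upwards [hfin] with y hy
            exact ENNReal.ofReal_toReal hy.ne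
          rw [lintegral_congr_ae he, Measure.lintegral_rnDeriv hac]
          simp
        rw [hgr1, mul_one]
      have hQ1' : (∫⁻ y, ENNReal.ofReal (G.indicator gr y) ^ (2:ℝ) ∂F.μ) ^ (1/(2:ℝ)) ≤
          ENNReal.ofReal (Real.exp (K / 2)) := by
        refine le_trans (ENNReal.rpow_le_rpow hQ1 (by norm_num)) (le_of_eq ?_)
        rw [ENNReal.ofReal_rpow_of_nonneg (Real.exp_pos K).le (by norm_num)]
        congr 1
        rw [← Real.exp_mul]
        congr 1; ring
      have hQ2 : (∫⁻ y, (‖η y‖₊ : ℝ≥0∞) ^ (2:ℝ) ∂F.μ) ^ (1/(2:ℝ)) = eLpNorm η 2 F.μ := by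
        rw [eLpNorm_eq_lintegral_rpow_enorm_toReal (by norm_num) ENNReal.ofNat_ne_top]
        simp only [enorm_eq_nnnorm]
        norm_num
      have hfinal : ∫⁻ y, ENNReal.ofReal (G.indicator gr y) * (‖η y‖₊ : ℝ≥0∞) ∂F.μ ≤
          ENNReal.ofReal (Real.exp (K / 2)) * ENNReal.ofReal (Real.exp (-lam * hh)) := by
        refine le_trans hCS (mul_le_mul' hQ1' ?_)
        rw [hQ2]; exact hη2
      calc |∫ y, gr y * G.indicator η y ∂F.μ| ≤ ∫ y, |gr y * G.indicator η y| ∂F.μ := habs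
      _ = ∫ y, gr y * |G.indicator η y| ∂F.μ := habs2
      _ = (∫⁻ y, ENNReal.ofReal (G.indicator gr y) * (‖η y‖₊ : ℝ≥0∞) ∂F.μ).toReal := e3
      _ ≤ (ENNReal.ofReal (Real.exp (K / 2)) * ENNReal.ofReal (Real.exp (-lam * hh))).toReal :=
          ENNReal.toReal_mono (ENNReal.mul_ne_top ENNReal.ofReal_ne_top ENNReal.ofReal_ne_top)
            hfinal
      _ = Real.exp (K / 2) * Real.exp (-lam * hh) := by
          rw [ENNReal.toReal_mul, ENNReal.toReal_ofReal (Real.exp_pos _).le,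
            ENNReal.toReal_ofReal (Real.exp_pos _).le]
    -- combine
    have hexp_le : Real.exp (K / 2) * Real.exp (-lam * hh) ≤ ε / 2 := by
      rw [← Real.exp_add, show K / 2 + -lam * hh = K / 2 - lam * hh by ring]
      calc Real.exp (K / 2 - lam * hh) ≤ Real.exp (Real.log (ε / 2)) :=
            Real.exp_le_exp.mpr harith
      _ = ε / 2 := Real.exp_log (by positivity)
    have hdiff : ((F.κ (t + hh)) x A).toReal - c = ∫ y, η y ∂ν := by
      rw [hην, hνuA]
    calc |((F.κ (t + hh)) x A).toReal - c| = |∫ y, η y ∂ν| := by rw [hdiff]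
    _ ≤ |∫ y in G, η y ∂ν| + |∫ y in Gᶜ, η y ∂ν| := by rw [hsplit2]; exact abs_add_le _ _
    _ ≤ Real.exp (K / 2) * Real.exp (-lam * hh) + ε / 2 := add_le_add hmainpart htailpart
    _ ≤ ε / 2 + ε / 2 := by linarith only [hexp_le]
    _ = ε := by ring
  have htv' : tvDist ((F.κ (t + hh)) x) F.μ ≤ ε :=
    ciSup_le fun A => hest A.1 A.2
  have hmix : tmix F x ε ≤ ENNReal.ofReal (t + hh) := by
    rw [tmix]
    exact iInf₂_le (t + hh) ⟨by positivity, htv'⟩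
  refine le_trans hmix (ENNReal.ofReal_le_ofReal ?_)
  rw [hhdef, hW]
  rw [add_div]
  rw [← add_assoc]
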